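/- arXiv:1910.02141 — 3 statements merged into one kernel-verified Lean document; each statement's English description precedes it below -/
import Mathlib

section
/- Let T > 0, 0 < α < 1, N ∈ ℕ, and let β₀, β₁, …, β_N and τ₁, …, τ_N be positive reals. Let f : [0,T] → ℝ be twice continuously differentiable. With D_t^α f, D̂_t^α f and ε as below, for every t ∈ [0,T]: | D_t^α f − D̂_t^α f | ≤ ( sup_{z ∈ [0,T]} |ε(z)| ) · ( |f′(0)| + ∫₀ᵀ |f″(s)| ds ). -/
open MeasureTheory intervalIntegral Real Set

set_option maxHeartbeats 1600000 in
/-- Sup-norm error bound for the Prony approximation of the Caputo fractional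
derivative (Lemma 1). -/
theorem prony_error_bound (T α : ℝ) (hT : 0 < T) (hα0 : 0 < α) (hα1 : α < 1)
    (N : ℕ) (β0 : ℝ) (hβ0 : 0 < β0) (β τ : ℕ → ℝ)
    (hβ : ∀ k ∈ Finset.Icc 1 N, 0 < β k) (hτ : ∀ k ∈ Finset.Icc 1 N, 0 < τ k)
    (f : ℝ → ℝ) (hf : ContDiffOn ℝ 2 f (Set.Icc 0 T))
    (f' f'' : ℝ → ℝ)
    (hf' : f' = derivWithin f (Set.Icc 0 T))
    (hf'' : f'' = derivWithin f' (Set.Icc 0 T))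
    (D : ℝ → ℝ)
    (hD : ∀ t, D t = (1 / Real.Gamma (2 - α)) *
      (t ^ (1 - α) * f' 0 + ∫ s in (0 : ℝ)..t, (t - s) ^ (1 - α) * f'' s))
    (Dhat : ℝ → ℝ)
    (hDhat : ∀ t, Dhat t = β0 * f' t +
      ∑ k ∈ Finset.Icc 1 N, ∫ s in (0 : ℝ)..t, β k * Real.exp ((s - t) / τ k) * f' s)
    (ε : ℝ → ℝ)
    (hε : ∀ z, ε z = z ^ (1 - α) / Real.Gamma (2 - α) - β0 +
      ∑ k ∈ Finset.Icc 1 N, β k * τ k * (Real.exp (-z / τ k) - 1)) :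
    ∀ t ∈ Set.Icc (0 : ℝ) T,
      |D t - Dhat t| ≤
        sSup ((fun z => |ε z|) '' Set.Icc 0 T) *
          (|f' 0| + ∫ s in (0 : ℝ)..T, |f'' s|) := by
  intro t ht
  obtain ⟨ht0, htT⟩ := ht
  have hΓ : (0:ℝ) < Real.Gamma (2 - α) := Real.Gamma_pos_of_pos (by linarith)
  have hsub : Set.Icc (0:ℝ) t ⊆ Set.Icc 0 T := Set.Icc_subset_Icc le_rfl htT
  have hUD : UniqueDiffOn ℝ (Set.Icc (0:ℝ) T) := uniqueDiffOn_Icc hT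
  -- regularity of f', f''
  have hf1 : ContDiffOn ℝ 1 f' (Set.Icc 0 T) := by
    rw [hf']; exact hf.derivWithin hUD (by norm_num)
  have hf'c : ContinuousOn f' (Set.Icc 0 T) := hf1.continuousOn
  have hf''c : ContinuousOn f'' (Set.Icc 0 T) := by
    rw [hf'']; exact hf1.continuousOn_derivWithin hUD le_rfl
  have hderI : ∀ s ∈ Set.Ioo (0:ℝ) t, HasDerivAt f' (f'' s) s := by
    intro s hs
    have hsT : s ∈ Set.Icc (0:ℝ) T := ⟨hs.1.le, hs.2.le.trans htT⟩
    have hmem : Set.Icc (0:ℝ) T ∈ nhds s :=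
      Icc_mem_nhds hs.1 (lt_of_lt_of_le hs.2 htT)
    have hd : HasDerivWithinAt f' (f'' s) (Set.Icc 0 T) s := by
      rw [hf'']
      exact ((hf1.differentiableOn (by norm_num)) s hsT).hasDerivWithinAt
    exact hd.hasDerivAt hmem
  -- continuity of the rpow kernel
  have hrpow : Continuous (fun z : ℝ => z ^ (1 - α)) := by
    rw [continuous_iff_continuousAt]
    intro z
    exact Real.continuousAt_rpow_const z _ (Or.inr (by linarith))
  -- integrability helper
  have hint : ∀ g : ℝ → ℝ, Continuous g →
      IntervalIntegrable (fun s => g s * f'' s) volume 0 t := by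
    intro g hg
    exact ((hg.continuousOn).mul (hf''c.mono hsub)).intervalIntegrable_of_Icc ht0
  have hint' : ∀ g : ℝ → ℝ, Continuous g →
      IntervalIntegrable (fun s => g s * f' s) volume 0 t := by
    intro g hg
    exact ((hg.continuousOn).mul (hf'c.mono hsub)).intervalIntegrable_of_Icc ht0
  -- FTC for f'
  have hFTC : ∫ s in (0:ℝ)..t, f'' s = f' t - f' 0 := by
    apply intervalIntegral.integral_eq_sub_of_hasDeriv_right_of_le ht0
      (hf'c.mono hsub)
      (fun s hs => ((hderI s hs).hasDerivWithinAt))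
      (((hf''c.mono hsub)).intervalIntegrable_of_Icc ht0)
  -- per-k integration by parts
  have hk : ∀ k ∈ Finset.Icc 1 N,
      (∫ s in (0:ℝ)..t, β k * Real.exp ((s - t) / τ k) * f' s)
        = β k * τ k * (1 - Real.exp (-t / τ k)) * f' 0
          + ∫ s in (0:ℝ)..t, (β k * τ k * (1 - Real.exp ((s - t) / τ k))) * f'' s := by
    intro k hkm
    have hτk := hτ k hkm
    have hg' : ∀ s ∈ Set.Ioo (0:ℝ) t, HasDerivAt
        (fun s => (β k * τ k * (Real.exp ((s - t) / τ k) - 1)) * f' s)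
        (β k * Real.exp ((s - t) / τ k) * f' s
          + (β k * τ k * (Real.exp ((s - t) / τ k) - 1)) * f'' s) s := by
      intro s hs
      have h0 : HasDerivAt (fun s : ℝ => (s - t) / τ k) (1 / τ k) s := by
        simpa using ((hasDerivAt_id s).sub_const t).div_const (τ k)
      have h1 : HasDerivAt (fun s => β k * τ k * (Real.exp ((s - t) / τ k) - 1))
          (β k * Real.exp ((s - t) / τ k)) s := by
        have h2 := (h0.exp.sub_const 1).const_mul (β k * τ k)
        convert h2 using 1
        · rfl
        · rfl
        rw [mul_assoc, mul_left_comm (τ k), mul_one_div_cancel hτk.ne', mul_one]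
      exact h1.mul (hderI s hs)
    have hintA : IntervalIntegrable
        (fun s => β k * Real.exp ((s - t) / τ k) * f' s) volume 0 t :=
      hint' _ (by fun_prop)
    have hintB : IntervalIntegrable
        (fun s => (β k * τ k * (Real.exp ((s - t) / τ k) - 1)) * f'' s) volume 0 t :=
      hint _ (by fun_prop)
    have hGcont : ContinuousOn
        (fun s => (β k * τ k * (Real.exp ((s - t) / τ k) - 1)) * f' s)
        (Set.Icc 0 t) := by
      exact (Continuous.continuousOn (by fun_prop)).mul (hf'c.mono hsub)
    have hftc : (∫ s in (0:ℝ)..t,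
        (β k * Real.exp ((s - t) / τ k) * f' s
          + (β k * τ k * (Real.exp ((s - t) / τ k) - 1)) * f'' s))
        = (β k * τ k * (Real.exp ((t - t) / τ k) - 1)) * f' t
          - (β k * τ k * (Real.exp ((0 - t) / τ k) - 1)) * f' 0 :=
      intervalIntegral.integral_eq_sub_of_hasDeriv_right_of_le ht0 hGcont
        (fun s hs => (hg' s hs).hasDerivWithinAt) (hintA.add hintB)
    rw [intervalIntegral.integral_add hintA hintB] at hftc
    have h3 : (β k * τ k * (Real.exp ((t - t) / τ k) - 1)) * f' t = 0 := by
      rw [sub_self, zero_div, Real.exp_zero]; ring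
    have h4 : ((0:ℝ) - t) / τ k = -t / τ k := by ring
    rw [h3, h4] at hftc
    have hC : (∫ s in (0:ℝ)..t, (β k * τ k * (1 - Real.exp ((s - t) / τ k))) * f'' s)
        = - ∫ s in (0:ℝ)..t, (β k * τ k * (Real.exp ((s - t) / τ k) - 1)) * f'' s := by
      rw [← intervalIntegral.integral_neg]
      exact intervalIntegral.integral_congr (fun s _ => by ring)
    rw [hC]
    linarith [hftc]
  -- rewrite Dhat
  have hGc : Continuous (fun s : ℝ => ∑ k ∈ Finset.Icc 1 N,
      β k * τ k * (1 - Real.exp ((s - t) / τ k))) := by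
    apply continuous_finset_sum
    intro k _
    fun_prop
  have e2 : Dhat t = (β0 + ∑ k ∈ Finset.Icc 1 N, β k * τ k * (1 - Real.exp (-t / τ k))) * f' 0
      + ∫ s in (0:ℝ)..t,
          (β0 + ∑ k ∈ Finset.Icc 1 N, β k * τ k * (1 - Real.exp ((s - t) / τ k))) * f'' s := by
    have hsum : (∑ k ∈ Finset.Icc 1 N, ∫ s in (0:ℝ)..t, β k * Real.exp ((s - t) / τ k) * f' s)
        = (∑ k ∈ Finset.Icc 1 N, β k * τ k * (1 - Real.exp (-t / τ k))) * f' 0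
          + ∫ s in (0:ℝ)..t, (∑ k ∈ Finset.Icc 1 N,
              β k * τ k * (1 - Real.exp ((s - t) / τ k))) * f'' s := by
      rw [Finset.sum_congr rfl hk, Finset.sum_add_distrib, Finset.sum_mul]
      congr 1
      rw [← intervalIntegral.integral_finset_sum
        (fun k hkm => hint (fun s => β k * τ k * (1 - Real.exp ((s - t) / τ k))) (by fun_prop))]
      exact intervalIntegral.integral_congr (fun s _ => by rw [Finset.sum_mul])
    have hft : f' t = f' 0 + ∫ s in (0:ℝ)..t, f'' s := by rw [hFTC]; ring
    have h5 : (∫ s in (0:ℝ)..t,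
          (β0 + ∑ k ∈ Finset.Icc 1 N, β k * τ k * (1 - Real.exp ((s - t) / τ k))) * f'' s)
        = β0 * (∫ s in (0:ℝ)..t, f'' s)
          + ∫ s in (0:ℝ)..t, (∑ k ∈ Finset.Icc 1 N,
              β k * τ k * (1 - Real.exp ((s - t) / τ k))) * f'' s := by
      rw [← intervalIntegral.integral_const_mul,
        ← intervalIntegral.integral_add (hint (fun _ => β0) continuous_const) (hint _ hGc)]
      exact intervalIntegral.integral_congr (fun s _ => by ring)
    rw [hDhat t, hsum, hft, h5]
    ring
  -- rewrite D
  have e1 : D t = (t ^ (1 - α) / Real.Gamma (2 - α)) * f' 0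
      + ∫ s in (0:ℝ)..t, ((t - s) ^ (1 - α) / Real.Gamma (2 - α)) * f'' s := by
    rw [hD t, mul_add]
    congr 1
    · ring
    · rw [← intervalIntegral.integral_const_mul]
      exact intervalIntegral.integral_congr (fun s _ => by ring)
  -- pointwise forms of ε
  have hεpt : ∀ s : ℝ, ε (t - s) = ((t - s) ^ (1 - α) / Real.Gamma (2 - α))
      - (β0 + ∑ k ∈ Finset.Icc 1 N, β k * τ k * (1 - Real.exp ((s - t) / τ k))) := by
    intro s
    rw [hε (t - s)]
    have h1 : ∀ k ∈ Finset.Icc 1 N, β k * τ k * (Real.exp (-(t - s) / τ k) - 1)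
        = -(β k * τ k * (1 - Real.exp ((s - t) / τ k))) := by
      intro k _
      have h2 : -(t - s) / τ k = (s - t) / τ k := by ring
      rw [h2]; ring
    rw [Finset.sum_congr rfl h1, Finset.sum_neg_distrib]
    ring
  have hεt : ε t = t ^ (1 - α) / Real.Gamma (2 - α)
      - (β0 + ∑ k ∈ Finset.Icc 1 N, β k * τ k * (1 - Real.exp (-t / τ k))) := by
    rw [hε t]
    have h1 : ∀ k ∈ Finset.Icc 1 N, β k * τ k * (Real.exp (-t / τ k) - 1)
        = -(β k * τ k * (1 - Real.exp (-t / τ k))) := fun k _ => by ring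
    rw [Finset.sum_congr rfl h1, Finset.sum_neg_distrib]
    ring
  -- key identity
  have key : D t - Dhat t = f' 0 * ε t + ∫ s in (0:ℝ)..t, ε (t - s) * f'' s := by
    have hintP : IntervalIntegrable
        (fun s => ((t - s) ^ (1 - α) / Real.Gamma (2 - α)) * f'' s) volume 0 t :=
      hint _ ((hrpow.comp (continuous_const.sub continuous_id)).div_const _)
    have hintQ : IntervalIntegrable
        (fun s => (β0 + ∑ k ∈ Finset.Icc 1 N, β k * τ k * (1 - Real.exp ((s - t) / τ k))) * f'' s)
        volume 0 t := hint _ (continuous_const.add hGc)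
    have hsplit : (∫ s in (0:ℝ)..t, ε (t - s) * f'' s)
        = (∫ s in (0:ℝ)..t, ((t - s) ^ (1 - α) / Real.Gamma (2 - α)) * f'' s)
          - ∫ s in (0:ℝ)..t,
              (β0 + ∑ k ∈ Finset.Icc 1 N, β k * τ k * (1 - Real.exp ((s - t) / τ k))) * f'' s := by
      rw [← intervalIntegral.integral_sub hintP hintQ]
      refine intervalIntegral.integral_congr fun s _ => ?_
      simp only [hεpt]
      ring
    rw [e1, e2, hεt, hsplit]
    ring
  -- the sup bound
  set M := sSup ((fun z => |ε z|) '' Set.Icc 0 T) with hM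
  have hεc : Continuous ε := by
    have hεeq : ε = fun z => z ^ (1 - α) / Real.Gamma (2 - α) - β0 +
        ∑ k ∈ Finset.Icc 1 N, β k * τ k * (Real.exp (-z / τ k) - 1) := funext hε
    rw [hεeq]
    apply Continuous.add
    · exact (hrpow.div_const _).sub continuous_const
    · apply continuous_finset_sum
      intro k _
      fun_prop
  have hbdd : BddAbove ((fun z => |ε z|) '' Set.Icc 0 T) :=
    isCompact_Icc.bddAbove_image (hεc.abs.continuousOn)
  have hle : ∀ z ∈ Set.Icc (0:ℝ) T, |ε z| ≤ M :=
    fun z hz => le_csSup hbdd ⟨z, hz, rfl⟩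
  have hM0 : 0 ≤ M := le_trans (abs_nonneg (ε 0)) (hle 0 ⟨le_rfl, hT.le⟩)
  -- integral bounds
  have habs : |∫ s in (0:ℝ)..t, ε (t - s) * f'' s|
      ≤ ∫ s in (0:ℝ)..t, M * |f'' s| := by
    refine le_trans (intervalIntegral.abs_integral_le_integral_abs ht0) ?_
    apply intervalIntegral.integral_mono_on ht0
    · exact (((hεc.comp (continuous_const.sub continuous_id)).continuousOn.mul
        (hf''c.mono hsub)).abs).intervalIntegrable_of_Icc ht0
    · exact (continuous_const.continuousOn.mul
        ((hf''c.mono hsub).abs)).intervalIntegrable_of_Icc ht0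
    · intro s hs
      have hts : t - s ∈ Set.Icc (0:ℝ) T := ⟨by linarith [hs.2], by linarith [hs.1]⟩
      calc |ε (t - s) * f'' s| = |ε (t - s)| * |f'' s| := abs_mul _ _
        _ ≤ M * |f'' s| := by
            exact mul_le_mul_of_nonneg_right (hle _ hts) (abs_nonneg _)
  have hf''absT : IntervalIntegrable (fun s => |f'' s|) volume 0 T :=
    (hf''c.abs).intervalIntegrable_of_Icc hT.le
  have hgrow : (∫ s in (0:ℝ)..t, |f'' s|) ≤ ∫ s in (0:ℝ)..T, |f'' s| := by
    have h1 : IntervalIntegrable (fun s => |f'' s|) volume 0 t :=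
      ((hf''c.mono hsub).abs).intervalIntegrable_of_Icc ht0
    have h2 : IntervalIntegrable (fun s => |f'' s|) volume t T :=
      ((hf''c.mono (Set.Icc_subset_Icc ht0 le_rfl)).abs).intervalIntegrable_of_Icc htT
    rw [← intervalIntegral.integral_add_adjacent_intervals h1 h2]
    have h3 : 0 ≤ ∫ s in t..T, |f'' s| :=
      intervalIntegral.integral_nonneg htT (fun s _ => abs_nonneg _)
    linarith
  have hint_nonneg : 0 ≤ ∫ s in (0:ℝ)..t, |f'' s| :=
    intervalIntegral.integral_nonneg ht0 (fun s _ => abs_nonneg _)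
  calc |D t - Dhat t| = |f' 0 * ε t + ∫ s in (0:ℝ)..t, ε (t - s) * f'' s| := by rw [key]
    _ ≤ |f' 0 * ε t| + |∫ s in (0:ℝ)..t, ε (t - s) * f'' s| := abs_add_le _ _
    _ ≤ |f' 0| * M + ∫ s in (0:ℝ)..t, M * |f'' s| := by
        refine add_le_add ?_ habs
        rw [abs_mul]
        exact mul_le_mul_of_nonneg_left (hle t ⟨ht0, htT⟩) (abs_nonneg _)
    _ = |f' 0| * M + M * ∫ s in (0:ℝ)..t, |f'' s| := by
        rw [intervalIntegral.integral_const_mul]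
    _ ≤ |f' 0| * M + M * ∫ s in (0:ℝ)..T, |f'' s| := by
        exact add_le_add_right (mul_le_mul_of_nonneg_left hgrow hM0) _
    _ = M * (|f' 0| + ∫ s in (0:ℝ)..T, |f'' s|) := by ring
end

section
/- Let T > 0, 0 < α < 1, N ∈ ℕ, and let β₀, β₁, …, β_N and τ₁, …, τ_N be positive reals. Let f : [0,T] → ℝ be twice continuously differentiable with f′(0) = 0. With D_t^α f, D̂_t^α f and ε as below, for every t ∈ [0,T]: | D_t^α f − D̂_t^α f | ≤ ( ∫₀ᵀ ε(z)² dz )^{1/2} · ( ∫₀ᵀ f″(s)² ds )^{1/2}. -/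
open MeasureTheory intervalIntegral Real Set

private lemma cs_interval {a b : ℝ} (hab : a ≤ b) {g h : ℝ → ℝ}
    (hg : ContinuousOn g (Icc a b)) (hh : ContinuousOn h (Icc a b)) :
    |∫ s in a..b, g s * h s| ≤
      Real.sqrt (∫ s in a..b, g s ^ 2) * Real.sqrt (∫ s in a..b, h s ^ 2) := by
  set μ : Measure ℝ := volume.restrict (Ioc a b) with hμ
  haveI : IsFiniteMeasure μ := by
    constructor
    rw [hμ, Measure.restrict_apply_univ, Real.volume_Ioc]
    exact ENNReal.ofReal_lt_top
  have hpq : Real.HolderConjugate 2 2 := Real.HolderConjugate.two_two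
  obtain ⟨Cg, hCg⟩ := isCompact_Icc.exists_bound_of_continuousOn hg
  obtain ⟨Ch, hCh⟩ := isCompact_Icc.exists_bound_of_continuousOn hh
  have hgm : AEStronglyMeasurable g μ :=
    (hg.mono Ioc_subset_Icc_self).aestronglyMeasurable measurableSet_Ioc
  have hhm : AEStronglyMeasurable h μ :=
    (hh.mono Ioc_subset_Icc_self).aestronglyMeasurable measurableSet_Ioc
  have hgmem : MemLp g (ENNReal.ofReal 2) μ :=
    MemLp.of_bound hgm Cg (ae_restrict_of_forall_mem measurableSet_Ioc
      fun x hx => hCg x (Ioc_subset_Icc_self hx))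
  have hhmem : MemLp h (ENNReal.ofReal 2) μ :=
    MemLp.of_bound hhm Ch (ae_restrict_of_forall_mem measurableSet_Ioc
      fun x hx => hCh x (Ioc_subset_Icc_self hx))
  have main := MeasureTheory.integral_mul_norm_le_Lp_mul_Lq hpq hgmem hhmem
  have e2 : ∀ x : ℝ, ‖x‖ ^ (2 : ℝ) = x ^ 2 := by
    intro x
    rw [show (2 : ℝ) = ((2 : ℕ) : ℝ) by norm_num, Real.rpow_natCast, Real.norm_eq_abs, sq_abs]
  have h2g : (∫ s, ‖g s‖ ^ (2 : ℝ) ∂μ) = ∫ s, g s ^ 2 ∂μ :=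
    integral_congr_ae (Filter.Eventually.of_forall fun x => e2 _)
  have h2h : (∫ s, ‖h s‖ ^ (2 : ℝ) ∂μ) = ∫ s, h s ^ 2 ∂μ :=
    integral_congr_ae (Filter.Eventually.of_forall fun x => e2 _)
  have habs : |∫ s, g s * h s ∂μ| ≤ ∫ s, ‖g s‖ * ‖h s‖ ∂μ := by
    rw [← Real.norm_eq_abs]
    refine (MeasureTheory.norm_integral_le_integral_norm _).trans_eq ?_
    exact integral_congr_ae (Filter.Eventually.of_forall fun x => norm_mul _ _)
  rw [h2g, h2h] at main
  rw [intervalIntegral.integral_of_le hab, intervalIntegral.integral_of_le hab,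
    intervalIntegral.integral_of_le hab, Real.sqrt_eq_rpow, Real.sqrt_eq_rpow]
  exact habs.trans main

set_option maxHeartbeats 1000000 in
/-- L²-norm error bound for the Prony approximation of the Caputo fractional
derivative when `f'(0) = 0` (Remark 1). -/
theorem prony_error_bound_L2 (T α : ℝ) (hT : 0 < T) (hα0 : 0 < α) (hα1 : α < 1)
    (N : ℕ) (β0 : ℝ) (hβ0 : 0 < β0) (β τ : ℕ → ℝ)
    (hβ : ∀ k ∈ Finset.Icc 1 N, 0 < β k) (hτ : ∀ k ∈ Finset.Icc 1 N, 0 < τ k)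
    (f : ℝ → ℝ) (hf : ContDiffOn ℝ 2 f (Set.Icc 0 T))
    (f' f'' : ℝ → ℝ)
    (hf' : f' = derivWithin f (Set.Icc 0 T))
    (hf'' : f'' = derivWithin f' (Set.Icc 0 T))
    (hf'0 : f' 0 = 0)
    (D : ℝ → ℝ)
    (hD : ∀ t, D t = (1 / Real.Gamma (2 - α)) *
      (t ^ (1 - α) * f' 0 + ∫ s in (0 : ℝ)..t, (t - s) ^ (1 - α) * f'' s))
    (Dhat : ℝ → ℝ)
    (hDhat : ∀ t, Dhat t = β0 * f' t +
      ∑ k ∈ Finset.Icc 1 N, ∫ s in (0 : ℝ)..t, β k * Real.exp ((s - t) / τ k) * f' s)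
    (ε : ℝ → ℝ)
    (hε : ∀ z, ε z = z ^ (1 - α) / Real.Gamma (2 - α) - β0 +
      ∑ k ∈ Finset.Icc 1 N, β k * τ k * (Real.exp (-z / τ k) - 1)) :
    ∀ t ∈ Set.Icc (0 : ℝ) T,
      |D t - Dhat t| ≤
        Real.sqrt (∫ z in (0 : ℝ)..T, (ε z) ^ 2) *
          Real.sqrt (∫ s in (0 : ℝ)..T, (f'' s) ^ 2) := by
  intro t ht
  obtain ⟨ht0, htT⟩ := ht
  have hud : UniqueDiffOn ℝ (Icc (0 : ℝ) T) := uniqueDiffOn_Icc hT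
  have hf'c : ContDiffOn ℝ 1 f' (Icc 0 T) := by
    rw [hf']; exact hf.derivWithin hud (by norm_num)
  have hf'cont : ContinuousOn f' (Icc 0 T) := hf'c.continuousOn
  have hf''cont : ContinuousOn f'' (Icc 0 T) := by
    rw [hf'']; exact hf'c.continuousOn_derivWithin hud le_rfl
  have hder : ∀ s ∈ Ioo (0 : ℝ) T, HasDerivAt f' (f'' s) s := by
    intro s hs
    have h1 : HasDerivWithinAt f' (derivWithin f' (Icc 0 T) s) (Icc 0 T) s :=
      (hf'c.differentiableOn one_ne_zero s (Ioo_subset_Icc_self hs)).hasDerivWithinAt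
    rw [← hf''] at h1
    exact h1.hasDerivAt (Icc_mem_nhds hs.1 hs.2)
  have hsub : Icc (0 : ℝ) t ⊆ Icc 0 T := Icc_subset_Icc le_rfl htT
  have hcf' : ContinuousOn f' (Icc 0 t) := hf'cont.mono hsub
  have hcf'' : ContinuousOn f'' (Icc 0 t) := hf''cont.mono hsub
  have hderui : ∀ s ∈ Ioo (0 : ℝ) t, HasDerivAt f' (f'' s) s := fun s hs =>
    hder s ⟨hs.1, hs.2.trans_le htT⟩
  have hint_f'' : IntervalIntegrable f'' volume 0 t := by
    apply ContinuousOn.intervalIntegrable; rwa [uIcc_of_le ht0]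
  have hFTC : f' t = ∫ s in (0 : ℝ)..t, f'' s := by
    have h := integral_eq_sub_of_hasDerivAt_of_le ht0 hcf' hderui hint_f''
    rw [hf'0, sub_zero] at h
    exact h.symm
  have hcexp : ∀ k, Continuous fun s : ℝ => Real.exp ((s - t) / τ k) := fun k =>
    Real.continuous_exp.comp ((continuous_id.sub continuous_const).div_const _)
  have hrpowc : Continuous fun x : ℝ => x ^ (1 - α) :=
    continuous_iff_continuousAt.2 fun x =>
      Real.continuousAt_rpow_const x _ (Or.inr (by linarith))
  have hpowc : Continuous fun s : ℝ => (t - s) ^ (1 - α) :=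
    hrpowc.comp (continuous_const.sub continuous_id)
  have hint_pow : IntervalIntegrable (fun s => (t - s) ^ (1 - α) * f'' s) volume 0 t := by
    apply ContinuousOn.intervalIntegrable; rw [uIcc_of_le ht0]
    exact hpowc.continuousOn.mul hcf''
  have hint_exp_f'' : ∀ k, IntervalIntegrable
      (fun s => Real.exp ((s - t) / τ k) * f'' s) volume 0 t := fun k => by
    apply ContinuousOn.intervalIntegrable; rw [uIcc_of_le ht0]
    exact (hcexp k).continuousOn.mul hcf''
  have hint_exp_f' : ∀ k, IntervalIntegrable
      (fun s => Real.exp ((s - t) / τ k) * f' s) volume 0 t := fun k => by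
    apply ContinuousOn.intervalIntegrable; rw [uIcc_of_le ht0]
    exact (hcexp k).continuousOn.mul hcf'
  -- integration by parts for each Prony mode
  have hIBP : ∀ k ∈ Finset.Icc 1 N,
      (∫ s in (0 : ℝ)..t, β k * Real.exp ((s - t) / τ k) * f' s) =
        β k * τ k * f' t -
          β k * τ k * ∫ s in (0 : ℝ)..t, Real.exp ((s - t) / τ k) * f'' s := by
    intro k hk
    have hτk := hτ k hk
    have hgder : ∀ s ∈ Ioo (0 : ℝ) t,
        HasDerivAt (fun s => τ k * Real.exp ((s - t) / τ k) * f' s)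
          (Real.exp ((s - t) / τ k) * f' s + τ k * Real.exp ((s - t) / τ k) * f'' s) s := by
      intro s hs
      have h1 : HasDerivAt (fun s : ℝ => (s - t) / τ k) (1 / τ k) s := by
        simpa using ((hasDerivAt_id s).sub_const t).div_const (τ k)
      have h2 : HasDerivAt (fun s : ℝ => τ k * Real.exp ((s - t) / τ k))
          (Real.exp ((s - t) / τ k)) s := by
        have h3 := (h1.exp).const_mul (τ k)
        refine h3.congr_deriv ?_
        field_simp
      exact h2.mul (hderui s hs)
    have hcg : ContinuousOn (fun s => τ k * Real.exp ((s - t) / τ k) * f' s) (Icc 0 t) :=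
      ((continuous_const.mul (hcexp k)).continuousOn).mul hcf'
    have hint2 : IntervalIntegrable
        (fun s => τ k * Real.exp ((s - t) / τ k) * f'' s) volume 0 t := by
      apply ContinuousOn.intervalIntegrable; rw [uIcc_of_le ht0]
      exact ((continuous_const.mul (hcexp k)).continuousOn).mul hcf''
    have hintd : IntervalIntegrable
        (fun s => Real.exp ((s - t) / τ k) * f' s +
          τ k * Real.exp ((s - t) / τ k) * f'' s) volume 0 t :=
      (hint_exp_f' k).add hint2
    have heq := integral_eq_sub_of_hasDerivAt_of_le ht0 hcg hgder hintd
    rw [intervalIntegral.integral_add (hint_exp_f' k) hint2] at heq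
    simp only [sub_self, zero_div, Real.exp_zero, mul_one, hf'0, mul_zero, sub_zero] at heq
    -- heq : ∫ exp f' + ∫ τ exp f'' = τ k * f' t
    have hsplit : (∫ s in (0 : ℝ)..t, τ k * Real.exp ((s - t) / τ k) * f'' s) =
        τ k * ∫ s in (0 : ℝ)..t, Real.exp ((s - t) / τ k) * f'' s := by
      rw [← intervalIntegral.integral_const_mul]
      congr 1; funext s; ring
    have hmain : (∫ s in (0 : ℝ)..t, Real.exp ((s - t) / τ k) * f' s) =
        τ k * f' t - τ k * ∫ s in (0 : ℝ)..t, Real.exp ((s - t) / τ k) * f'' s := by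
      rw [hsplit] at heq; linarith
    calc (∫ s in (0 : ℝ)..t, β k * Real.exp ((s - t) / τ k) * f' s)
        = β k * ∫ s in (0 : ℝ)..t, Real.exp ((s - t) / τ k) * f' s := by
          rw [← intervalIntegral.integral_const_mul]
          congr 1; funext s; ring
      _ = β k * τ k * f' t -
            β k * τ k * ∫ s in (0 : ℝ)..t, Real.exp ((s - t) / τ k) * f'' s := by
          rw [hmain]; ring
  -- key identity
  have hkey : D t - Dhat t = ∫ s in (0 : ℝ)..t, ε (t - s) * f'' s := by
    have hεexp : ∀ s : ℝ, ε (t - s) * f'' s =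
        ((1 / Real.Gamma (2 - α)) * ((t - s) ^ (1 - α) * f'' s) - β0 * f'' s) +
          ∑ k ∈ Finset.Icc 1 N,
            (β k * τ k * (Real.exp ((s - t) / τ k) * f'' s) - β k * τ k * f'' s) := by
      intro s
      rw [hε, add_mul, sub_mul, Finset.sum_mul]
      congr 1
      · ring
      · refine Finset.sum_congr rfl fun k _ => ?_
        rw [show -(t - s) = s - t from by ring]
        ring
    have hintk : ∀ k ∈ Finset.Icc 1 N, IntervalIntegrable
        (fun s => β k * τ k * (Real.exp ((s - t) / τ k) * f'' s) - β k * τ k * f'' s)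
        volume 0 t := fun k _ =>
      ((hint_exp_f'' k).const_mul _).sub (hint_f''.const_mul _)
    have hintsum : IntervalIntegrable (fun s => ∑ k ∈ Finset.Icc 1 N,
        (β k * τ k * (Real.exp ((s - t) / τ k) * f'' s) - β k * τ k * f'' s)) volume 0 t := by
      have h := IntervalIntegrable.sum (μ := volume) (a := 0) (b := t)
        (f := fun k s => β k * τ k * (Real.exp ((s - t) / τ k) * f'' s) - β k * τ k * f'' s)
        (Finset.Icc 1 N) hintk
      rw [Finset.sum_fn] at h
      exact h
    have hintA : IntervalIntegrable
        (fun s => (1 / Real.Gamma (2 - α)) * ((t - s) ^ (1 - α) * f'' s) - β0 * f'' s)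
        volume 0 t := (hint_pow.const_mul _).sub (hint_f''.const_mul _)
    have hRHS : (∫ s in (0 : ℝ)..t, ε (t - s) * f'' s) =
        ((1 / Real.Gamma (2 - α)) * (∫ s in (0 : ℝ)..t, (t - s) ^ (1 - α) * f'' s)
          - β0 * f' t) +
          ∑ k ∈ Finset.Icc 1 N,
            (β k * τ k * (∫ s in (0 : ℝ)..t, Real.exp ((s - t) / τ k) * f'' s)
              - β k * τ k * f' t) := by
      simp only [hεexp]
      rw [intervalIntegral.integral_add hintA hintsum,
        intervalIntegral.integral_sub (hint_pow.const_mul _) (hint_f''.const_mul _),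
        intervalIntegral.integral_finset_sum hintk,
        intervalIntegral.integral_const_mul, intervalIntegral.integral_const_mul, ← hFTC]
      congr 1
      refine Finset.sum_congr rfl fun k hk => ?_
      rw [intervalIntegral.integral_sub ((hint_exp_f'' k).const_mul _)
        (hint_f''.const_mul _), intervalIntegral.integral_const_mul,
        intervalIntegral.integral_const_mul, ← hFTC]
    rw [hRHS, hD t, hDhat t, hf'0, mul_zero, zero_add,
      Finset.sum_congr rfl hIBP, Finset.sum_sub_distrib, Finset.sum_sub_distrib]
    ring
  rw [hkey]
  -- continuity of ε
  have hεc : Continuous ε := by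
    have hεfun : ε = fun z => z ^ (1 - α) / Real.Gamma (2 - α) - β0 +
        ∑ k ∈ Finset.Icc 1 N, β k * τ k * (Real.exp (-z / τ k) - 1) := funext hε
    rw [hεfun]
    refine Continuous.add ((hrpowc.div_const _).sub continuous_const) ?_
    refine continuous_finset_sum _ fun k _ => ?_
    exact continuous_const.mul
      ((Real.continuous_exp.comp (continuous_id.neg.div_const _)).sub continuous_const)
  have hcs := cs_interval ht0 (g := fun s => ε (t - s)) (h := f'')
    ((hεc.comp (continuous_const.sub continuous_id)).continuousOn) hcf''
  refine hcs.trans ?_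
  have hεint : IntervalIntegrable (fun z => ε z ^ 2) volume 0 T :=
    (hεc.pow 2).intervalIntegrable 0 T
  have hf''int : IntervalIntegrable (fun s => f'' s ^ 2) volume 0 T := by
    apply ContinuousOn.intervalIntegrable; rw [uIcc_of_le hT.le]
    exact hf''cont.pow 2
  have h1 : (∫ s in (0 : ℝ)..t, ε (t - s) ^ 2) ≤ ∫ z in (0 : ℝ)..T, ε z ^ 2 := by
    have hcv : (∫ s in (0 : ℝ)..t, ε (t - s) ^ 2) = ∫ z in (0 : ℝ)..t, ε z ^ 2 := by
      have := intervalIntegral.integral_comp_sub_left (a := (0 : ℝ)) (b := t)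
        (fun z => ε z ^ 2) t
      simpa using this
    rw [hcv]
    exact intervalIntegral.integral_mono_interval le_rfl ht0 htT
      (Filter.Eventually.of_forall fun z => sq_nonneg _) hεint
  have h2 : (∫ s in (0 : ℝ)..t, f'' s ^ 2) ≤ ∫ s in (0 : ℝ)..T, f'' s ^ 2 :=
    intervalIntegral.integral_mono_interval le_rfl ht0 htT
      (Filter.Eventually.of_forall fun z => sq_nonneg _) hf''int
  exact mul_le_mul (Real.sqrt_le_sqrt h1) (Real.sqrt_le_sqrt h2)
    (Real.sqrt_nonneg _) (Real.sqrt_nonneg _)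
end

section
/- Let β > 0, τ > 0, Δ > 0, let a ≥ 0 and b = a + Δ, and let f : [a,b] → ℝ be three times continuously differentiable. Let e = exp(−Δ/(2τ)). Then | ∫ₐᵇ β exp((s−b)/τ) f′(s) ds − e β ( f(b) − f(a) ) | ≤ (β Δ³ / 24) ( τ^{−2} sup_{[a,b]} |f′| + 2 τ^{−1} sup_{[a,b]} |f″| + (1 + e) sup_{[a,b]} |f‴| ). -/
open MeasureTheory intervalIntegral Real Set

/-- Midpoint-type bound: if `h` vanishes at the midpoint of `[a,b]` and has two
derivatives within `[a,b]` with second derivative bounded by `D`, then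
`|∫ h| ≤ D (b-a)^3 / 24`. -/
lemma midpoint_zero_integral_bound {a b D : ℝ} (hab : a < b)
    {h h1 h2 : ℝ → ℝ}
    (hd1 : ∀ s ∈ Set.Icc a b, HasDerivWithinAt h (h1 s) (Set.Icc a b) s)
    (hd2 : ∀ s ∈ Set.Icc a b, HasDerivWithinAt h1 (h2 s) (Set.Icc a b) s)
    (hm0 : h ((a + b) / 2) = 0)
    (hD : ∀ s ∈ Set.Icc a b, |h2 s| ≤ D) :
    |∫ s in a..b, h s| ≤ D * (b - a) ^ 3 / 24 := by
  set m : ℝ := (a + b) / 2 with hm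
  have hma : a ≤ m := by simp only [hm]; linarith
  have hmb : m ≤ b := by simp only [hm]; linarith
  have hmI : m ∈ Set.Icc a b := ⟨hma, hmb⟩
  have hD0 : 0 ≤ D := le_trans (abs_nonneg _) (hD m hmI)
  have hch : ContinuousOn h (Set.Icc a b) := fun s hs => (hd1 s hs).continuousWithinAt
  have hch1 : ContinuousOn h1 (Set.Icc a b) := fun s hs => (hd2 s hs).continuousWithinAt
  -- Lipschitz estimate on h1
  have hLip : ∀ s ∈ Set.Icc a b, |h1 s - h1 m| ≤ D * |s - m| := by
    intro s hs
    have := Convex.norm_image_sub_le_of_norm_hasDerivWithin_le hd2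
      (fun x hx => by simpa [Real.norm_eq_abs] using hD x hx) (convex_Icc a b) hmI hs
    simpa [Real.norm_eq_abs] using this
  set ψ : ℝ → ℝ := fun s => h s - h1 m * (s - m) with hψ
  have hψd : ∀ s ∈ Set.Icc a b, HasDerivWithinAt ψ (h1 s - h1 m) (Set.Icc a b) s := by
    intro s hs
    have h2' : HasDerivWithinAt (fun t : ℝ => h1 m * (t - m)) (h1 m) (Set.Icc a b) s := by
      simpa using (((hasDerivAt_id s).sub_const m).const_mul (h1 m)).hasDerivWithinAt
    exact (hd1 s hs).sub h2'
  have hψm : ψ m = 0 := by simp [hψ, hm0]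
  have hcψ : ContinuousOn ψ (Set.Icc a b) := fun s hs => (hψd s hs).continuousWithinAt
  have comp : ∀ c d : ℝ, (∫ t in c..d, (t - m)) = ((d - m) ^ 2 - (c - m) ^ 2) / 2 := by
    intro c d
    rw [intervalIntegral.integral_comp_sub_right (fun u => u) m, integral_id]
  -- Pointwise quadratic bound on ψ
  have hPt : ∀ s ∈ Set.Icc a b, |ψ s| ≤ D * (s - m) ^ 2 / 2 := by
    intro s hs
    have hint1 : IntervalIntegrable (fun t => h1 t - h1 m) volume m s := by
      apply ContinuousOn.intervalIntegrable
      apply (hch1.sub continuousOn_const).mono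
      intro x hx
      rcases le_total m s with hms | hsm
      · rw [Set.uIcc_of_le hms] at hx
        exact ⟨le_trans hma hx.1, le_trans hx.2 hs.2⟩
      · rw [Set.uIcc_of_ge hsm] at hx
        exact ⟨le_trans hs.1 hx.1, le_trans hx.2 hmb⟩
    rcases le_total m s with hms | hsm
    · have hFTC : (∫ t in m..s, (h1 t - h1 m)) = ψ s - ψ m := by
        apply intervalIntegral.integral_eq_sub_of_hasDeriv_right_of_le hms
        · exact hcψ.mono (Set.Icc_subset_Icc hma hs.2)
        · intro x hx
          have hxI : x ∈ Set.Ioo a b := ⟨lt_of_le_of_lt hma hx.1, lt_of_lt_of_le hx.2 hs.2⟩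
          have hxIcc : x ∈ Set.Icc a b := Set.Ioo_subset_Icc_self hxI
          exact ((hψd x hxIcc).hasDerivAt (Icc_mem_nhds hxI.1 hxI.2)).hasDerivWithinAt
        · exact hint1
      have h1' : |ψ s| = |∫ t in m..s, (h1 t - h1 m)| := by rw [hFTC, hψm, sub_zero]
      have h2' : |∫ t in m..s, (h1 t - h1 m)| ≤ ∫ t in m..s, |h1 t - h1 m| := by
        simpa [Real.norm_eq_abs] using
          intervalIntegral.norm_integral_le_integral_norm (f := fun t => h1 t - h1 m) hms
      have h3' : (∫ t in m..s, |h1 t - h1 m|) ≤ ∫ t in m..s, D * (t - m) := by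
        apply intervalIntegral.integral_mono_on hms hint1.norm
        · exact (ContinuousOn.intervalIntegrable (by fun_prop))
        · intro x hx
          have hxI : x ∈ Set.Icc a b := ⟨le_trans hma hx.1, le_trans hx.2 hs.2⟩
          have := hLip x hxI
          rwa [abs_of_nonneg (by linarith [hx.1] : (0:ℝ) ≤ x - m)] at this
      have h4' : (∫ t in m..s, D * (t - m)) = D * (s - m) ^ 2 / 2 := by
        rw [intervalIntegral.integral_const_mul, comp m s]; ring
      calc |ψ s| = |∫ t in m..s, (h1 t - h1 m)| := h1'
        _ ≤ ∫ t in m..s, |h1 t - h1 m| := h2'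
        _ ≤ ∫ t in m..s, D * (t - m) := h3'
        _ = D * (s - m) ^ 2 / 2 := h4'
    · have hint1' : IntervalIntegrable (fun t => h1 t - h1 m) volume s m := hint1.symm
      have hFTC : (∫ t in s..m, (h1 t - h1 m)) = ψ m - ψ s := by
        apply intervalIntegral.integral_eq_sub_of_hasDeriv_right_of_le hsm
        · exact hcψ.mono (Set.Icc_subset_Icc hs.1 hmb)
        · intro x hx
          have hxI : x ∈ Set.Ioo a b := ⟨lt_of_le_of_lt hs.1 hx.1, lt_of_lt_of_le hx.2 hmb⟩
          have hxIcc : x ∈ Set.Icc a b := Set.Ioo_subset_Icc_self hxI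
          exact ((hψd x hxIcc).hasDerivAt (Icc_mem_nhds hxI.1 hxI.2)).hasDerivWithinAt
        · exact hint1'
      have h1' : |ψ s| = |∫ t in s..m, (h1 t - h1 m)| := by
        rw [hFTC, hψm, zero_sub, abs_neg]
      have h2' : |∫ t in s..m, (h1 t - h1 m)| ≤ ∫ t in s..m, |h1 t - h1 m| := by
        simpa [Real.norm_eq_abs] using
          intervalIntegral.norm_integral_le_integral_norm (f := fun t => h1 t - h1 m) hsm
      have h3' : (∫ t in s..m, |h1 t - h1 m|) ≤ ∫ t in s..m, D * (m - t) := by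
        apply intervalIntegral.integral_mono_on hsm hint1'.norm
        · exact (ContinuousOn.intervalIntegrable (by fun_prop))
        · intro x hx
          have hxI : x ∈ Set.Icc a b := ⟨le_trans hs.1 hx.1, le_trans hx.2 hmb⟩
          have := hLip x hxI
          rwa [abs_of_nonpos (by linarith [hx.2] : x - m ≤ 0), neg_sub] at this
      have h4' : (∫ t in s..m, D * (m - t)) = D * (s - m) ^ 2 / 2 := by
        have e1 : (∫ t in s..m, (m - t)) = -∫ t in s..m, (t - m) := by
          rw [← intervalIntegral.integral_neg]
          congr 1; funext t; ring
        rw [intervalIntegral.integral_const_mul, e1, comp s m]; ring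
      calc |ψ s| = |∫ t in s..m, (h1 t - h1 m)| := h1'
        _ ≤ ∫ t in s..m, |h1 t - h1 m| := h2'
        _ ≤ ∫ t in s..m, D * (m - t) := h3'
        _ = D * (s - m) ^ 2 / 2 := h4'
  -- ∫ h = ∫ ψ since ∫ (s - m) = 0
  have hintψ : IntervalIntegrable ψ volume a b :=
    ContinuousOn.intervalIntegrable (by rwa [Set.uIcc_of_le hab.le])
  have hinth : IntervalIntegrable h volume a b :=
    ContinuousOn.intervalIntegrable (by rwa [Set.uIcc_of_le hab.le])
  have hintlin : IntervalIntegrable (fun s => h1 m * (s - m)) volume a b :=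
    ContinuousOn.intervalIntegrable (by fun_prop)
  have hsplit : (∫ s in a..b, h s) = ∫ s in a..b, ψ s := by
    have e0 : (∫ s in a..b, (s - m)) = 0 := by
      rw [comp a b]
      have : b - m = -(a - m) := by simp only [hm]; ring
      rw [this]; ring
    have : (∫ s in a..b, ψ s) = (∫ s in a..b, h s) - h1 m * ∫ s in a..b, (s - m) := by
      rw [← intervalIntegral.integral_const_mul,
        ← intervalIntegral.integral_sub hinth hintlin]
    rw [this, e0, mul_zero, sub_zero]
  rw [hsplit]
  have h5 : |∫ s in a..b, ψ s| ≤ ∫ s in a..b, |ψ s| := by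
    simpa [Real.norm_eq_abs] using
      intervalIntegral.norm_integral_le_integral_norm (f := ψ) hab.le
  have h6 : (∫ s in a..b, |ψ s|) ≤ ∫ s in a..b, D * (s - m) ^ 2 / 2 := by
    apply intervalIntegral.integral_mono_on hab.le hintψ.norm
    · exact ContinuousOn.intervalIntegrable (by fun_prop)
    · exact hPt
  have h7 : (∫ s in a..b, D * (s - m) ^ 2 / 2) = D * (b - a) ^ 3 / 24 := by
    have e1 : (∫ s in a..b, (s - m) ^ 2) = ((b - m) ^ 3 - (a - m) ^ 3) / 3 := by
      rw [intervalIntegral.integral_comp_sub_right (fun u => u ^ 2) m]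
      simp [integral_pow]; ring
    have e2 : (∫ s in a..b, D * (s - m) ^ 2 / 2) = D / 2 * ∫ s in a..b, (s - m) ^ 2 := by
      rw [← intervalIntegral.integral_const_mul]
      congr 1; funext s; ring
    rw [e2, e1]
    have hbm : b - m = (b - a) / 2 := by simp only [hm]; ring
    have ham : a - m = -((b - a) / 2) := by simp only [hm]; ring
    rw [hbm, ham]; ring
  calc |∫ s in a..b, ψ s| ≤ ∫ s in a..b, |ψ s| := h5
    _ ≤ ∫ s in a..b, D * (s - m) ^ 2 / 2 := h6
    _ = D * (b - a) ^ 3 / 24 := h7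

/-- One-step quadrature error bound for the exponential-midpoint discrete
update of a Maxwell element. -/
theorem maxwell_step_quadrature_error (β τ Δ : ℝ) (hβ : 0 < β) (hτ : 0 < τ) (hΔ : 0 < Δ)
    (a b : ℝ) (ha : 0 ≤ a) (hb : b = a + Δ)
    (f : ℝ → ℝ) (hf : ContDiffOn ℝ 3 f (Set.Icc a b))
    (e : ℝ) (he : e = Real.exp (-Δ / (2 * τ))) :
    |(∫ s in a..b, β * Real.exp ((s - b) / τ) * iteratedDerivWithin 1 f (Set.Icc a b) s)
        - e * β * (f b - f a)|
      ≤ β * Δ ^ 3 / 24 *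
        ((1 / τ ^ 2) *
            sSup ((fun s => |iteratedDerivWithin 1 f (Set.Icc a b) s|) '' Set.Icc a b)
          + (2 / τ) *
            sSup ((fun s => |iteratedDerivWithin 2 f (Set.Icc a b) s|) '' Set.Icc a b)
          + (1 + e) *
            sSup ((fun s => |iteratedDerivWithin 3 f (Set.Icc a b) s|) '' Set.Icc a b)) := by
  have hab : a < b := by rw [hb]; linarith
  have hu : UniqueDiffOn ℝ (Set.Icc a b) := uniqueDiffOn_Icc hab
  set I := Set.Icc a b with hI
  set f₁ := iteratedDerivWithin 1 f I with hf₁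
  set f₂ := iteratedDerivWithin 2 f I with hf₂
  set f₃ := iteratedDerivWithin 3 f I with hf₃
  have hcf1 : ContinuousOn f₁ I :=
    hf.continuousOn_iteratedDerivWithin (by norm_num) hu
  have hcf2 : ContinuousOn f₂ I :=
    hf.continuousOn_iteratedDerivWithin (by norm_num) hu
  have hcf3 : ContinuousOn f₃ I :=
    hf.continuousOn_iteratedDerivWithin (by norm_num) hu
  have hdf : ∀ s ∈ I, HasDerivWithinAt f (f₁ s) I s := by
    intro s hs
    have := (hf.differentiableOn (by norm_num) s hs).hasDerivWithinAt
    rwa [hf₁, iteratedDerivWithin_one]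
  have hdf1 : ∀ s ∈ I, HasDerivWithinAt f₁ (f₂ s) I s := by
    intro s hs
    have hdiff := hf.differentiableOn_iteratedDerivWithin
      (show ((1:ℕ) : WithTop ℕ∞) < 3 by norm_num) hu
    have := (hdiff s hs).hasDerivWithinAt
    rwa [hf₂, iteratedDerivWithin_succ]
  have hdf2 : ∀ s ∈ I, HasDerivWithinAt f₂ (f₃ s) I s := by
    intro s hs
    have hdiff := hf.differentiableOn_iteratedDerivWithin
      (show ((2:ℕ) : WithTop ℕ∞) < 3 by norm_num) hu
    have := (hdiff s hs).hasDerivWithinAt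
    rwa [hf₃, iteratedDerivWithin_succ]
  set C1 := sSup ((fun s => |f₁ s|) '' I) with hC1def
  set C2 := sSup ((fun s => |f₂ s|) '' I) with hC2def
  set C3 := sSup ((fun s => |f₃ s|) '' I) with hC3def
  have hbdd : ∀ (g : ℝ → ℝ), ContinuousOn g I → ∀ s ∈ I, |g s| ≤ sSup ((fun t => |g t|) '' I) := by
    intro g hg s hs
    apply le_csSup
    · exact (isCompact_Icc.image_of_continuousOn hg.abs).bddAbove
    · exact Set.mem_image_of_mem _ hs
  have hC1 : ∀ s ∈ I, |f₁ s| ≤ C1 := hbdd f₁ hcf1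
  have hC2 : ∀ s ∈ I, |f₂ s| ≤ C2 := hbdd f₂ hcf2
  have hC3 : ∀ s ∈ I, |f₃ s| ≤ C3 := hbdd f₃ hcf3
  have haI : a ∈ I := Set.left_mem_Icc.mpr hab.le
  have hC1p : 0 ≤ C1 := le_trans (abs_nonneg _) (hC1 a haI)
  have hC2p : 0 ≤ C2 := le_trans (abs_nonneg _) (hC2 a haI)
  have hC3p : 0 ≤ C3 := le_trans (abs_nonneg _) (hC3 a haI)
  have he0 : 0 < e := by rw [he]; exact Real.exp_pos _
  -- exponential derivative
  have hE : ∀ s : ℝ, HasDerivAt (fun t => Real.exp ((t - b) / τ))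
      (Real.exp ((s - b) / τ) * (1 / τ)) s := by
    intro s
    exact (Real.hasDerivAt_exp _).comp s (((hasDerivAt_id s).sub_const b).div_const τ)
  set h : ℝ → ℝ := fun s => β * ((Real.exp ((s - b) / τ) - e) * f₁ s) with hhdef
  set h1 : ℝ → ℝ := fun s => β * (Real.exp ((s - b) / τ) * (1 / τ) * f₁ s
      + (Real.exp ((s - b) / τ) - e) * f₂ s) with hh1def
  set h2 : ℝ → ℝ := fun s => β * (Real.exp ((s - b) / τ) * (1 / τ) * (1 / τ) * f₁ s
      + Real.exp ((s - b) / τ) * (1 / τ) * f₂ s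
      + (Real.exp ((s - b) / τ) * (1 / τ) * f₂ s + (Real.exp ((s - b) / τ) - e) * f₃ s))
      with hh2def
  have hd1 : ∀ s ∈ I, HasDerivWithinAt h (h1 s) I s := by
    intro s hs
    exact ((((hE s).sub_const e).hasDerivWithinAt).mul (hdf1 s hs)).const_mul β
  have hd2 : ∀ s ∈ I, HasDerivWithinAt h1 (h2 s) I s := by
    intro s hs
    have hg1 : HasDerivWithinAt (fun t => Real.exp ((t - b) / τ) * (1 / τ) * f₁ t)
        (Real.exp ((s - b) / τ) * (1 / τ) * (1 / τ) * f₁ s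
          + Real.exp ((s - b) / τ) * (1 / τ) * f₂ s) I s := by
      exact (((hE s).mul_const (1 / τ)).hasDerivWithinAt).mul (hdf1 s hs)
    have hg2 : HasDerivWithinAt (fun t => (Real.exp ((t - b) / τ) - e) * f₂ t)
        (Real.exp ((s - b) / τ) * (1 / τ) * f₂ s + (Real.exp ((s - b) / τ) - e) * f₃ s) I s :=
      (((hE s).sub_const e).hasDerivWithinAt).mul (hdf2 s hs)
    exact (hg1.add hg2).const_mul β
  -- midpoint vanishing
  have hmid : h ((a + b) / 2) = 0 := by
    have : ((a + b) / 2 - b) / τ = -Δ / (2 * τ) := by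
      rw [hb]; field_simp; ring
    simp [hhdef, this, ← he]
  -- bound on h2
  set D := β * ((1 / τ ^ 2) * C1 + (2 / τ) * C2 + (1 + e) * C3) with hDdef
  have hD : ∀ s ∈ I, |h2 s| ≤ D := by
    intro s hs
    set E := Real.exp ((s - b) / τ) with hEdef
    have hE0 : 0 < E := Real.exp_pos _
    have hE1 : E ≤ 1 := by
      rw [hEdef, Real.exp_le_one_iff]
      have : s ≤ b := hs.2
      have : s - b ≤ 0 := by linarith
      exact div_nonpos_of_nonpos_of_nonneg this hτ.le
    have b1 : |E * (1 / τ) * (1 / τ) * f₁ s| ≤ (1 / τ ^ 2) * C1 := by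
      rw [abs_mul, abs_of_pos (by positivity : (0:ℝ) < E * (1 / τ) * (1 / τ))]
      calc E * (1 / τ) * (1 / τ) * |f₁ s| ≤ 1 * (1 / τ) * (1 / τ) * C1 := by
            gcongr
            exact hC1 s hs
        _ = (1 / τ ^ 2) * C1 := by ring
    have b2 : |E * (1 / τ) * f₂ s| ≤ (1 / τ) * C2 := by
      rw [abs_mul, abs_of_pos (by positivity : (0:ℝ) < E * (1 / τ))]
      calc E * (1 / τ) * |f₂ s| ≤ 1 * (1 / τ) * C2 := by
            gcongr
            exact hC2 s hs
        _ = (1 / τ) * C2 := by ring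
    have b3 : |(E - e) * f₃ s| ≤ (1 + e) * C3 := by
      rw [abs_mul]
      apply mul_le_mul _ (hC3 s hs) (abs_nonneg _) (by linarith)
      calc |E - e| ≤ |E| + |e| := abs_sub _ _
        _ = E + e := by rw [abs_of_pos hE0, abs_of_pos he0]
        _ ≤ 1 + e := by linarith
    have btotal : |E * (1 / τ) * (1 / τ) * f₁ s + E * (1 / τ) * f₂ s
        + (E * (1 / τ) * f₂ s + (E - e) * f₃ s)|
        ≤ (1 / τ ^ 2) * C1 + (2 / τ) * C2 + (1 + e) * C3 := by
      calc |E * (1 / τ) * (1 / τ) * f₁ s + E * (1 / τ) * f₂ s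
          + (E * (1 / τ) * f₂ s + (E - e) * f₃ s)|
          ≤ |E * (1 / τ) * (1 / τ) * f₁ s + E * (1 / τ) * f₂ s|
            + |E * (1 / τ) * f₂ s + (E - e) * f₃ s| := abs_add_le _ _
        _ ≤ (|E * (1 / τ) * (1 / τ) * f₁ s| + |E * (1 / τ) * f₂ s|)
            + (|E * (1 / τ) * f₂ s| + |(E - e) * f₃ s|) := by
              gcongr <;> exact abs_add_le _ _
        _ ≤ (1 / τ ^ 2) * C1 + (2 / τ) * C2 + (1 + e) * C3 := by
              have : (2 / τ) * C2 = (1 / τ) * C2 + (1 / τ) * C2 := by ring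
              rw [this]; linarith
    calc |h2 s| = β * |E * (1 / τ) * (1 / τ) * f₁ s + E * (1 / τ) * f₂ s
        + (E * (1 / τ) * f₂ s + (E - e) * f₃ s)| := by
          rw [hh2def]; rw [abs_mul, abs_of_pos hβ]
      _ ≤ β * ((1 / τ ^ 2) * C1 + (2 / τ) * C2 + (1 + e) * C3) :=
          mul_le_mul_of_nonneg_left btotal hβ.le
      _ = D := hDdef.symm
  -- rewrite the LHS as |∫ h|
  have hf1int : IntervalIntegrable f₁ volume a b :=
    ContinuousOn.intervalIntegrable (by rwa [Set.uIcc_of_le hab.le])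
  have hFTC : (∫ s in a..b, f₁ s) = f b - f a := by
    apply intervalIntegral.integral_eq_sub_of_hasDeriv_right_of_le hab.le hf.continuousOn
    · intro x hx
      have hxIcc : x ∈ I := Set.Ioo_subset_Icc_self hx
      exact ((hdf x hxIcc).hasDerivAt (Icc_mem_nhds hx.1 hx.2)).hasDerivWithinAt
    · exact hf1int
  have hEf1int : IntervalIntegrable (fun s => β * Real.exp ((s - b) / τ) * f₁ s) volume a b := by
    apply ContinuousOn.intervalIntegrable
    apply ContinuousOn.mul _ (hcf1.mono (by rw [Set.uIcc_of_le hab.le]))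
    fun_prop
  have hLHS : (∫ s in a..b, β * Real.exp ((s - b) / τ) * f₁ s) - e * β * (f b - f a)
      = ∫ s in a..b, h s := by
    rw [← hFTC, ← intervalIntegral.integral_const_mul (e * β) f₁,
      ← intervalIntegral.integral_sub hEf1int (hf1int.const_mul (e * β))]
    apply intervalIntegral.integral_congr
    intro s _
    simp only [hhdef]; ring
  rw [hLHS]
  have hmain := midpoint_zero_integral_bound hab hd1 hd2 hmid hD
  calc |∫ s in a..b, h s| ≤ D * (b - a) ^ 3 / 24 := hmain
    _ = β * Δ ^ 3 / 24 * ((1 / τ ^ 2) * C1 + (2 / τ) * C2 + (1 + e) * C3) := by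
        rw [hDdef, hb]; ring
end
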